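/- With the quadratic symbol q₀₁ and the symbol c(ξ₁,ξ₂) := [(m − 2ξ₁ξ₂)q₀₁(ξ₁,ξ₂) − 2(ξ₂² + m)q₀₁(ξ₂,ξ₁)]/Δ(ξ₁,ξ₂), define c₀²(ξ) := −g¹¹_{uₜ}/2 + (i/m)g⁰¹_u ξ − ((2g⁰¹_{uₓ} + g¹¹_{uₜ})/(2m))ξ² and c₁²(ξ) := −(i/2)g⁰¹_u + (1/2)(g¹¹_{uₜ} − g⁰¹_{uₓ} + f_{uₜu}/m)ξ − (i/m)g⁰¹_u ξ². Then there exists C > 0 such that for all real ξ₁, ξ₂ with ⟨ξ₂⟩ ≤ ⟨ξ₁⟩/20 one has |c(ξ₁,ξ₂) − c₀²(ξ₂) − c₁²(ξ₂)/ξ₁| ≤ C(1 + ξ₂⁴)/ξ₁², where ⟨ξ⟩ := (1 + ξ²)^{1/2}. -/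

import Mathlib

open Complex

set_option maxHeartbeats 1600000000

lemma absC_le (a b : ℝ) : ‖(a:ℂ) + (b:ℂ)*Complex.I‖ ≤ |a| + |b| := by
  rw [Complex.norm_add_mul_I]
  have h : a^2 + b^2 ≤ (|a| + |b|)^2 := by
    nlinarith [_root_.abs_nonneg a, _root_.abs_nonneg b, _root_.sq_abs a, _root_.sq_abs b,
      mul_nonneg (_root_.abs_nonneg a) (_root_.abs_nonneg b)]
  calc Real.sqrt (a^2+b^2) ≤ Real.sqrt ((|a|+|b|)^2) := Real.sqrt_le_sqrt h
  _ = |a| + |b| := Real.sqrt_sq (by positivity)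

/-- The quadratic symbol
`q₀₁(ξ₁,ξ₂) = f_{uₜu} + 2i g⁰¹_u ξ₁ − 2 g⁰¹_{uₓ} ξ₁ξ₂ − g¹¹_{uₜ} ξ₂²`. -/
noncomputable def q01 (futu g01u g01ux g11ut : ℝ) (ξ₁ ξ₂ : ℝ) : ℂ :=
  (futu : ℂ) + 2 * Complex.I * g01u * ξ₁ - 2 * g01ux * ξ₁ * ξ₂
    - (g11ut : ℂ) * (ξ₂ : ℂ)^2

/-- The denominator `Δ(ξ₁,ξ₂) = (m − 2ξ₁ξ₂)² − 4(ξ₁² + m)(ξ₂² + m)`. -/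
noncomputable def Δc (m ξ₁ ξ₂ : ℝ) : ℂ :=
  ((m : ℂ) - 2*ξ₁*ξ₂)^2 - 4*((ξ₁ : ℂ)^2 + m)*((ξ₂ : ℂ)^2 + m)

/-- The (non-symmetric) normal form symbol
`c(ξ₁,ξ₂) = [(m − 2ξ₁ξ₂)q₀₁(ξ₁,ξ₂) − 2(ξ₂² + m)q₀₁(ξ₂,ξ₁)]/Δ(ξ₁,ξ₂)`. -/
noncomputable def cSym (m futu g01u g01ux g11ut : ℝ) (ξ₁ ξ₂ : ℝ) : ℂ :=
  (((m : ℂ) - 2*ξ₁*ξ₂) * q01 futu g01u g01ux g11ut ξ₁ ξ₂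
    - 2*((ξ₂ : ℂ)^2 + m) * q01 futu g01u g01ux g11ut ξ₂ ξ₁) / Δc m ξ₁ ξ₂

/-- First high–low Taylor coefficient
`c₀²(ξ) = −g¹¹_{uₜ}/2 + (i/m)g⁰¹_u ξ − ((2g⁰¹_{uₓ} + g¹¹_{uₜ})/(2m))ξ²`. -/
noncomputable def c02 (m g01u g01ux g11ut : ℝ) (ξ : ℝ) : ℂ :=
  -(g11ut : ℂ)/2 + Complex.I/m * g01u * ξ
    - (2*(g01ux : ℂ) + g11ut)/(2*m) * (ξ : ℂ)^2

/-- Second high–low Taylor coefficient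
`c₁²(ξ) = −(i/2)g⁰¹_u + (1/2)(g¹¹_{uₜ} − g⁰¹_{uₓ} + f_{uₜu}/m)ξ − (i/m)g⁰¹_u ξ²`. -/
noncomputable def c12 (m futu g01u g01ux g11ut : ℝ) (ξ : ℝ) : ℂ :=
  -(Complex.I/2) * g01u
    + (1/2) * ((g11ut : ℂ) - g01ux + (futu : ℂ)/m) * ξ
    - Complex.I/m * g01u * (ξ : ℂ)^2

/-- High–low symbol expansion of the non-symmetric normal form correction `C`:
`|c(ξ₁,ξ₂) − c₀²(ξ₂) − c₁²(ξ₂)/ξ₁| ≤ C(1 + ξ₂⁴)/ξ₁²` for `⟨ξ₂⟩ ≤ ⟨ξ₁⟩/20`. -/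
theorem cSym_high_low_expansion (m fuu futut futu g01u g01ut g01ux g11u g11ut g11ux : ℝ)
    (hm : 0 < m) :
    ∃ C > 0, ∀ ξ₁ ξ₂ : ℝ,
      Real.sqrt (1 + ξ₂^2) ≤ Real.sqrt (1 + ξ₁^2) / 20 →
      ‖cSym m futu g01u g01ux g11ut ξ₁ ξ₂
          - c02 m g01u g01ux g11ut ξ₂ - c12 m futu g01u g01ux g11ut ξ₂ / ξ₁‖
        ≤ C * (1 + ξ₂^4) / ξ₁^2 := by
  set M : ℝ := 1 + |futu| + |g01u| + |g01ux| + |g11ut| with hMdef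
  have hM1 : 1 ≤ M := by
    rw [hMdef]
    linarith [_root_.abs_nonneg futu, _root_.abs_nonneg g01u, _root_.abs_nonneg g01ux, _root_.abs_nonneg g11ut]
  have hM0 : 0 ≤ M := by linarith
  have hMf : |futu| ≤ M := by
    rw [hMdef]; linarith [_root_.abs_nonneg g01u, _root_.abs_nonneg g01ux, _root_.abs_nonneg g11ut]
  have hMg01u : |g01u| ≤ M := by
    rw [hMdef]; linarith [_root_.abs_nonneg futu, _root_.abs_nonneg g01ux, _root_.abs_nonneg g11ut]
  have hMg01ux : |g01ux| ≤ M := by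
    rw [hMdef]; linarith [_root_.abs_nonneg futu, _root_.abs_nonneg g01u, _root_.abs_nonneg g11ut]
  have hMg11ut : |g11ut| ≤ M := by
    rw [hMdef]; linarith [_root_.abs_nonneg futu, _root_.abs_nonneg g01u, _root_.abs_nonneg g01ux]
  refine ⟨13*(1+m)^2*M/m, div_pos (by nlinarith) hm, ?_⟩
  intro ξ₁ ξ₂ hyp
  have h400 : 400*(1+ξ₂^2) ≤ 1+ξ₁^2 := by
    nlinarith [hyp, Real.sqrt_nonneg (1+ξ₂^2), Real.sqrt_nonneg (1+ξ₁^2),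
      Real.sq_sqrt (show (0:ℝ) ≤ 1+ξ₂^2 by positivity),
      Real.sq_sqrt (show (0:ℝ) ≤ 1+ξ₁^2 by positivity)]
  have hx1sq : 399 ≤ ξ₁^2 := by nlinarith [sq_nonneg ξ₂]
  have hx1ne : ξ₁ ≠ 0 := by
    intro h; rw [h] at hx1sq; norm_num at hx1sq
  have hx1abs : 1 ≤ |ξ₁| := by
    nlinarith [_root_.sq_abs ξ₁, _root_.abs_nonneg ξ₁]
  have hx2 : 400*ξ₂^2 ≤ ξ₁^2 := by nlinarith
  have hs : (9/10)*ξ₁^2 ≤ ξ₁^2+ξ₂^2+ξ₁*ξ₂ := by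
    nlinarith [sq_nonneg (ξ₁+20*ξ₂)]
  have hd0 : 0 < 3*m^2+4*m*(ξ₁^2+ξ₂^2+ξ₁*ξ₂) := by nlinarith
  have hdlow : (18/5)*m*ξ₁^2 ≤ 3*m^2+4*m*(ξ₁^2+ξ₂^2+ξ₁*ξ₂) := by
    nlinarith [mul_le_mul_of_nonneg_left hs (le_of_lt hm)]
  -- the remainder numerator pieces
  set A0 : ℝ := 4*(m^1*futu*ξ₂^3) + 4*(m^2*g11ut*ξ₂^3) - 4*(m^2*g01ux*ξ₂^3)
      + 3*(m^2*futu*ξ₂^1) + 3*(m^3*g11ut*ξ₂^1) - 3*(m^3*g01ux*ξ₂^1) with hA0def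
  set B0 : ℝ := -(8*(m^1*g01u*ξ₂^4)) - 10*(m^2*g01u*ξ₂^2) - 3*(m^3*g01u*ξ₂^0) with hB0def
  set A1 : ℝ := -(4*(m^1*g11ut*ξ₂^4)) - 8*(m^1*g01ux*ξ₂^4) - 5*(m^2*g11ut*ξ₂^2)
      - 10*(m^2*g01ux*ξ₂^2) - 2*(m^2*futu*ξ₂^0) - 3*(m^3*g11ut*ξ₂^0) with hA1def
  set B1 : ℝ := -(8*(m^1*g01u*ξ₂^3)) - 6*(m^2*g01u*ξ₂^1) with hB1def
  -- the key algebraic identity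
  have hΔc : Δc m ξ₁ ξ₂ = ((-(3*m^2+4*m*(ξ₁^2+ξ₂^2+ξ₁*ξ₂)) : ℝ) : ℂ) := by
    simp only [Δc]; push_cast; ring
  have hmc : (m:ℂ) ≠ 0 := Complex.ofReal_ne_zero.mpr (ne_of_gt hm)
  have hx1c : ((ξ₁:ℝ):ℂ) ≠ 0 := Complex.ofReal_ne_zero.mpr hx1ne
  have hofd : ((-(3*m^2+4*m*(ξ₁^2+ξ₂^2+ξ₁*ξ₂)) : ℝ) : ℂ) ≠ 0 :=
    Complex.ofReal_ne_zero.mpr (by nlinarith)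
  have hofdC : (3*(m:ℂ)^2+4*(m:ℂ)*((ξ₁:ℂ)^2+(ξ₂:ℂ)^2+(ξ₁:ℂ)*(ξ₂:ℂ))) ≠ 0 := by
    have : (3*(m:ℂ)^2+4*(m:ℂ)*((ξ₁:ℂ)^2+(ξ₂:ℂ)^2+(ξ₁:ℂ)*(ξ₂:ℂ)))
        = ((3*m^2+4*m*(ξ₁^2+ξ₂^2+ξ₁*ξ₂) : ℝ) : ℂ) := by push_cast; ring
    rw [this]
    exact Complex.ofReal_ne_zero.mpr (ne_of_gt hd0)
  have hΔC : ((m : ℂ) - 2*(ξ₁:ℂ)*(ξ₂:ℂ))^2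
      - 4*((ξ₁ : ℂ)^2 + (m:ℂ))*((ξ₂ : ℂ)^2 + (m:ℂ)) ≠ 0 := by
    have : ((m : ℂ) - 2*(ξ₁:ℂ)*(ξ₂:ℂ))^2
        - 4*((ξ₁ : ℂ)^2 + (m:ℂ))*((ξ₂ : ℂ)^2 + (m:ℂ))
        = ((-(3*m^2+4*m*(ξ₁^2+ξ₂^2+ξ₁*ξ₂)) : ℝ) : ℂ) := by push_cast; ring
    rw [this]
    exact hofd
  have key : cSym m futu g01u g01ux g11ut ξ₁ ξ₂ - c02 m g01u g01ux g11ut ξ₂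
      - c12 m futu g01u g01ux g11ut ξ₂ / ξ₁
      = ((A0:ℂ) + (B0:ℂ)*Complex.I + ((A1:ℂ) + (B1:ℂ)*Complex.I)*(ξ₁:ℂ))
        / (2*(m:ℂ)*(ξ₁:ℂ)*((-(3*m^2+4*m*(ξ₁^2+ξ₂^2+ξ₁*ξ₂)) : ℝ) : ℂ)) := by
    rw [hA0def, hB0def, hA1def, hB1def]
    have h2m : (2*(m:ℂ)) ≠ 0 := by simpa using hmc
    have hcSym : cSym m futu g01u g01ux g11ut ξ₁ ξ₂
        = (((m : ℂ) - 2*ξ₁*ξ₂) * q01 futu g01u g01ux g11ut ξ₁ ξ₂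
          - 2*((ξ₂ : ℂ)^2 + m) * q01 futu g01u g01ux g11ut ξ₂ ξ₁)
          / ((-(3*m^2+4*m*(ξ₁^2+ξ₂^2+ξ₁*ξ₂)) : ℝ) : ℂ) := by
      rw [cSym, hΔc]
    have hc02 : c02 m g01u g01ux g11ut ξ₂
        = (-(g11ut:ℂ)*m + 2*Complex.I*g01u*ξ₂ - (2*(g01ux:ℂ)+g11ut)*(ξ₂:ℂ)^2)
          / (2*(m:ℂ)) := by
      rw [c02]; field_simp [hmc]
    have hc12 : c12 m futu g01u g01ux g11ut ξ₂ / (ξ₁:ℂ)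
        = (-Complex.I*m*g01u + ((m:ℂ)*(g11ut-g01ux)+futu)*ξ₂
            - 2*Complex.I*g01u*(ξ₂:ℂ)^2) / (2*(m:ℂ)*ξ₁) := by
      rw [c12, div_eq_div_iff (hx1c) (by exact mul_ne_zero h2m hx1c)]
      field_simp [hmc]
    rw [hcSym, hc02, hc12]
    rw [div_sub_div _ _ hofd h2m,
      div_sub_div _ _ (mul_ne_zero hofd h2m) (mul_ne_zero h2m hx1c),
      div_eq_div_iff
        (by exact mul_ne_zero (mul_ne_zero hofd h2m) (mul_ne_zero h2m hx1c))
        (by exact mul_ne_zero (mul_ne_zero (mul_ne_zero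
          (by norm_num : (2:ℂ) ≠ 0) hmc) hx1c) hofd)]
    simp only [q01]
    push_cast
    ring
  -- abs of denominator
  have hdenabs : ‖2*(m:ℂ)*(ξ₁:ℂ)*((-(3*m^2+4*m*(ξ₁^2+ξ₂^2+ξ₁*ξ₂)) : ℝ) : ℂ)‖
      = 2*m* |ξ₁| *(3*m^2+4*m*(ξ₁^2+ξ₂^2+ξ₁*ξ₂)) := by
    rw [norm_mul, norm_mul, norm_mul, Complex.norm_two, Complex.norm_real,
      Complex.norm_real, Complex.norm_real, Real.norm_eq_abs, Real.norm_eq_abs, Real.norm_eq_abs, _root_.abs_of_pos hm, _root_.abs_neg, _root_.abs_of_pos hd0]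
  -- term bounds machinery
  have absfact : ∀ (k j : ℕ) (p : ℝ), |m^k * p * ξ₂^j| = m^k * |p| * |ξ₂|^j := by
    intro k j p
    rw [_root_.abs_mul, _root_.abs_mul, _root_.abs_pow, _root_.abs_pow, _root_.abs_of_pos hm]
  have tle : ∀ (k j : ℕ) (p : ℝ), m^k * p * ξ₂^j ≤ m^k * |p| * |ξ₂|^j := by
    intro k j p; rw [← absfact]; exact _root_.le_abs_self _
  have tge : ∀ (k j : ℕ) (p : ℝ), -(m^k * |p| * |ξ₂|^j) ≤ m^k * p * ξ₂^j := by
    intro k j p; rw [← absfact]; exact _root_.neg_abs_le _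
  have hPW0 : 0 ≤ m*(1+m)^2*M*(1+ξ₂^4) := by
    exact mul_nonneg (mul_nonneg (mul_nonneg hm.le (sq_nonneg _)) hM0) (by positivity)
  have master : ∀ (p : ℝ), |p| ≤ M → ∀ k : ℕ, m^k ≤ m*(1+m)^2 →
      ∀ j : ℕ, |ξ₂|^j ≤ 1+ξ₂^4 →
      m^k* |p| * |ξ₂|^j ≤ m*(1+m)^2*M*(1+ξ₂^4) := by
    intro p hp k hk j hj
    have h1 : m^k* |p| ≤ m*(1+m)^2*M :=
      mul_le_mul hk hp (_root_.abs_nonneg p) (mul_nonneg hm.le (sq_nonneg _))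
    have h2 := mul_le_mul h1 hj (pow_nonneg (_root_.abs_nonneg ξ₂) j)
      (mul_nonneg (mul_nonneg hm.le (sq_nonneg _)) hM0)
    linarith
  have hm1 : m^1 ≤ m*(1+m)^2 := by nlinarith
  have hm2 : m^2 ≤ m*(1+m)^2 := by nlinarith
  have hm3 : m^3 ≤ m*(1+m)^2 := by nlinarith
  have hu : (0:ℝ) ≤ |ξ₂| := _root_.abs_nonneg _
  have hu4 : |ξ₂|^4 = ξ₂^4 := by
    rw [← _root_.abs_pow]; exact _root_.abs_of_nonneg (by positivity)
  have hj0 : |ξ₂|^(0:ℕ) ≤ 1+ξ₂^4 := by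
    simp only [pow_zero]; nlinarith [sq_nonneg (ξ₂^2)]
  have hj1 : |ξ₂|^(1:ℕ) ≤ 1+ξ₂^4 := by
    rw [← hu4]
    nlinarith [mul_nonneg (sq_nonneg (|ξ₂|-1)) (show (0:ℝ) ≤ |ξ₂|^2+|ξ₂|+1 by positivity),
      pow_nonneg hu 3]
  have hj2 : |ξ₂|^(2:ℕ) ≤ 1+ξ₂^4 := by
    rw [← hu4]; nlinarith [sq_nonneg (|ξ₂|^2-1), sq_nonneg (|ξ₂|)]
  have hj3 : |ξ₂|^(3:ℕ) ≤ 1+ξ₂^4 := by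
    rw [← hu4]
    nlinarith [sq_nonneg (|ξ₂|^2-|ξ₂|), sq_nonneg (|ξ₂|^2-1), sq_nonneg (|ξ₂|)]
  have hj4 : |ξ₂|^(4:ℕ) ≤ 1+ξ₂^4 := by rw [hu4]; nlinarith [sq_nonneg (ξ₂^2)]
  -- bounds on the four pieces
  have hbA0 : |A0| ≤ 21*(m*(1+m)^2*M*(1+ξ₂^4)) := by
    rw [hA0def, _root_.abs_le]
    constructor
    · linarith [tge 1 3 futu, tge 2 3 g11ut, tle 2 3 g01ux, tge 2 1 futu,
        tge 3 1 g11ut, tle 3 1 g01ux,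
        master futu hMf 1 hm1 3 hj3, master g11ut hMg11ut 2 hm2 3 hj3,
        master g01ux hMg01ux 2 hm2 3 hj3, master futu hMf 2 hm2 1 hj1,
        master g11ut hMg11ut 3 hm3 1 hj1, master g01ux hMg01ux 3 hm3 1 hj1]
    · linarith [tle 1 3 futu, tle 2 3 g11ut, tge 2 3 g01ux, tle 2 1 futu,
        tle 3 1 g11ut, tge 3 1 g01ux,
        master futu hMf 1 hm1 3 hj3, master g11ut hMg11ut 2 hm2 3 hj3,
        master g01ux hMg01ux 2 hm2 3 hj3, master futu hMf 2 hm2 1 hj1,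
        master g11ut hMg11ut 3 hm3 1 hj1, master g01ux hMg01ux 3 hm3 1 hj1]
  have hbB0 : |B0| ≤ 21*(m*(1+m)^2*M*(1+ξ₂^4)) := by
    rw [hB0def, _root_.abs_le]
    constructor
    · linarith [tle 1 4 g01u, tle 2 2 g01u, tle 3 0 g01u,
        master g01u hMg01u 1 hm1 4 hj4, master g01u hMg01u 2 hm2 2 hj2,
        master g01u hMg01u 3 hm3 0 hj0]
    · linarith [tge 1 4 g01u, tge 2 2 g01u, tge 3 0 g01u,
        master g01u hMg01u 1 hm1 4 hj4, master g01u hMg01u 2 hm2 2 hj2,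
        master g01u hMg01u 3 hm3 0 hj0]
  have hbA1 : |A1| ≤ 32*(m*(1+m)^2*M*(1+ξ₂^4)) := by
    rw [hA1def, _root_.abs_le]
    constructor
    · linarith [tle 1 4 g11ut, tle 1 4 g01ux, tle 2 2 g11ut, tle 2 2 g01ux,
        tle 2 0 futu, tle 3 0 g11ut,
        master g11ut hMg11ut 1 hm1 4 hj4, master g01ux hMg01ux 1 hm1 4 hj4,
        master g11ut hMg11ut 2 hm2 2 hj2, master g01ux hMg01ux 2 hm2 2 hj2,
        master futu hMf 2 hm2 0 hj0, master g11ut hMg11ut 3 hm3 0 hj0]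
    · linarith [tge 1 4 g11ut, tge 1 4 g01ux, tge 2 2 g11ut, tge 2 2 g01ux,
        tge 2 0 futu, tge 3 0 g11ut,
        master g11ut hMg11ut 1 hm1 4 hj4, master g01ux hMg01ux 1 hm1 4 hj4,
        master g11ut hMg11ut 2 hm2 2 hj2, master g01ux hMg01ux 2 hm2 2 hj2,
        master futu hMf 2 hm2 0 hj0, master g11ut hMg11ut 3 hm3 0 hj0]
  have hbB1 : |B1| ≤ 14*(m*(1+m)^2*M*(1+ξ₂^4)) := by
    rw [hB1def, _root_.abs_le]
    constructor
    · linarith [tle 1 3 g01u, tle 2 1 g01u,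
        master g01u hMg01u 1 hm1 3 hj3, master g01u hMg01u 2 hm2 1 hj1]
    · linarith [tge 1 3 g01u, tge 2 1 g01u,
        master g01u hMg01u 1 hm1 3 hj3, master g01u hMg01u 2 hm2 1 hj1]
  -- numerator bound
  have hnum : ‖(A0:ℂ) + (B0:ℂ)*Complex.I
        + ((A1:ℂ) + (B1:ℂ)*Complex.I)*(ξ₁:ℂ)‖
      ≤ 88*(m*(1+m)^2*M*(1+ξ₂^4))* |ξ₁| := by
    have h1 : ‖(A0:ℂ) + (B0:ℂ)*Complex.I
          + ((A1:ℂ) + (B1:ℂ)*Complex.I)*(ξ₁:ℂ)‖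
        ≤ (|A0| + |B0|) + (|A1| + |B1|)* |ξ₁| := by
      calc ‖(A0:ℂ) + (B0:ℂ)*Complex.I
            + ((A1:ℂ) + (B1:ℂ)*Complex.I)*(ξ₁:ℂ)‖
          ≤ ‖(A0:ℂ) + (B0:ℂ)*Complex.I‖
            + ‖((A1:ℂ) + (B1:ℂ)*Complex.I)*(ξ₁:ℂ)‖ :=
            norm_add_le _ _
        _ = ‖(A0:ℂ) + (B0:ℂ)*Complex.I‖
            + ‖(A1:ℂ) + (B1:ℂ)*Complex.I‖* |ξ₁| := by
            rw [norm_mul, Complex.norm_real, Real.norm_eq_abs]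
        _ ≤ (|A0| + |B0|) + (|A1| + |B1|)* |ξ₁| :=
            add_le_add (absC_le A0 B0)
              (mul_le_mul_of_nonneg_right (absC_le A1 B1) (_root_.abs_nonneg ξ₁))
    have h2 : (|A1| + |B1|)* |ξ₁| ≤ 46*(m*(1+m)^2*M*(1+ξ₂^4))* |ξ₁| :=
      mul_le_mul_of_nonneg_right (by linarith) (_root_.abs_nonneg ξ₁)
    have h3 : 42*(m*(1+m)^2*M*(1+ξ₂^4))*1 ≤ 42*(m*(1+m)^2*M*(1+ξ₂^4))* |ξ₁| :=
      mul_le_mul_of_nonneg_left hx1abs (by linarith)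
    linarith [h1, h2, h3]
  -- positivity of denominator
  have hdpos : 0 < 2*m* |ξ₁| *(3*m^2+4*m*(ξ₁^2+ξ₂^2+ξ₁*ξ₂)) :=
    mul_pos (mul_pos (by linarith) (_root_.abs_pos.mpr hx1ne)) hd0
  have hdpos' : 0 < 2*m* |ξ₁| *((18/5)*m*ξ₁^2) :=
    mul_pos (mul_pos (by linarith) (_root_.abs_pos.mpr hx1ne))
      (by nlinarith)
  -- conclude
  have hX : 0 ≤ ((1+m)^2*M/m)*(1+ξ₂^4)/ξ₁^2 := by
    apply div_nonneg _ (sq_nonneg ξ₁)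
    exact mul_nonneg (div_nonneg (mul_nonneg (sq_nonneg _) hM0) hm.le) (by positivity)
  calc ‖cSym m futu g01u g01ux g11ut ξ₁ ξ₂
          - c02 m g01u g01ux g11ut ξ₂ - c12 m futu g01u g01ux g11ut ξ₂ / ξ₁‖
      = ‖(A0:ℂ) + (B0:ℂ)*Complex.I
          + ((A1:ℂ) + (B1:ℂ)*Complex.I)*(ξ₁:ℂ)‖
        / (2*m* |ξ₁| *(3*m^2+4*m*(ξ₁^2+ξ₂^2+ξ₁*ξ₂))) := by
        rw [key, norm_div, hdenabs]
    _ ≤ (88*(m*(1+m)^2*M*(1+ξ₂^4))* |ξ₁|)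
        / (2*m* |ξ₁| *(3*m^2+4*m*(ξ₁^2+ξ₂^2+ξ₁*ξ₂))) :=
        (div_le_div_iff_of_pos_right hdpos).mpr hnum
    _ ≤ (88*(m*(1+m)^2*M*(1+ξ₂^4))* |ξ₁|) / (2*m* |ξ₁| *((18/5)*m*ξ₁^2)) := by
        apply div_le_div_of_nonneg_left _ hdpos' _
        · exact mul_nonneg (by linarith [hPW0]) (_root_.abs_nonneg ξ₁)
        · exact mul_le_mul_of_nonneg_left hdlow
            (mul_nonneg (by linarith) (_root_.abs_nonneg ξ₁))
    _ = (110/9)*(((1+m)^2*M/m)*(1+ξ₂^4)/ξ₁^2) := by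
        have habsne : |ξ₁| ≠ 0 := ne_of_gt (_root_.abs_pos.mpr hx1ne)
        field_simp
        ring
    _ ≤ 13*(1+m)^2*M/m * (1 + ξ₂^4) / ξ₁^2 := by
        have hne : (13*(1+m)^2*M/m * (1 + ξ₂^4) / ξ₁^2)
            - (110/9)*(((1+m)^2*M/m)*(1+ξ₂^4)/ξ₁^2)
            = (7/9)*(((1+m)^2*M/m)*(1+ξ₂^4)/ξ₁^2) := by ring
        linarith [hX]
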